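/- arXiv:1209.3233 — 4 statements merged into one kernel-verified Lean document; each statement's English description precedes it below -/
import Mathlib

section
/- For any real α > 1 and positive integers a_1, …, a_k, the number of lattice points (i_1, …, i_k) ∈ ℕ^k satisfying a_1 i_1^α + ⋯ + a_k i_k^α < n < a_1(i_1+1)^α + ⋯ + a_k(i_k+1)^α is O(n^{(k-1)/α}), where the implied constant depends only on α, k, a_1, …, a_k. -/
open Real Set

lemma straddle_aux (α : ℝ) (hα0 : 0 < α) (K : ℕ) (a : Fin (K+1) → ℕ) (n : ℝ)
    (i i' : Fin (K+1) → ℕ) (J : Fin (K+1))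
    (hoff : ∀ m, m ≠ J → i m = i' m) (hlt : i J < i' J)
    (h1 : n ≤ ∑ m, (a m : ℝ) * ((i m : ℝ) + if (m:ℕ) < (J:ℕ) + 1 then 1 else 0) ^ α)
    (h2 : (∑ m, (a m : ℝ) * ((i' m : ℝ) + if (m:ℕ) < (J:ℕ) then 1 else 0) ^ α) < n) :
    False := by
  have hle : (∑ m, (a m : ℝ) * ((i m : ℝ) + if (m:ℕ) < (J:ℕ) + 1 then 1 else 0) ^ α)
      ≤ ∑ m, (a m : ℝ) * ((i' m : ℝ) + if (m:ℕ) < (J:ℕ) then 1 else 0) ^ α := by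
    apply Finset.sum_le_sum
    intro m _
    rcases eq_or_ne m J with rfl | hm
    · rw [if_pos (Nat.lt_succ_self _), if_neg (lt_irrefl _)]
      have hc : (i m : ℝ) + 1 ≤ (i' m : ℝ) := by exact_mod_cast hlt
      have hr : ((i m : ℝ) + 1) ^ α ≤ ((i' m : ℝ) + 0) ^ α := by
        apply Real.rpow_le_rpow (by positivity) (by linarith) hα0.le
      exact mul_le_mul_of_nonneg_left hr (by positivity)
    · have hmv : (m : ℕ) ≠ (J : ℕ) := fun h => hm (Fin.ext h)
      have hiff : ((m:ℕ) < (J:ℕ) + 1) ↔ ((m:ℕ) < (J:ℕ)) := by omega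
      rw [hoff m hm]
      simp only [hiff]
      exact le_refl _
  linarith

/-- For α > 1 and positive integers a_1,…,a_k, the number of lattice points
(i_1,…,i_k) ∈ ℕ^k with a_1 i_1^α + ⋯ + a_k i_k^α < n < a_1(i_1+1)^α + ⋯ + a_k(i_k+1)^α
is O(n^{(k-1)/α}). -/
theorem stmt0 (α : ℝ) (hα : 1 < α) (k : ℕ) (hk : 1 ≤ k) (a : Fin k → ℕ)
    (ha : ∀ j, 0 < a j) :
    ∃ C > (0:ℝ), ∃ N : ℝ, ∀ n : ℝ, N ≤ n →
      (Set.Finite {i : Fin k → ℕ |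
          (∑ j, (a j : ℝ) * (i j : ℝ) ^ α) < n ∧
          n < ∑ j, (a j : ℝ) * ((i j : ℝ) + 1) ^ α}) ∧
      ((Set.ncard {i : Fin k → ℕ |
          (∑ j, (a j : ℝ) * (i j : ℝ) ^ α) < n ∧
          n < ∑ j, (a j : ℝ) * ((i j : ℝ) + 1) ^ α} : ℝ)
        ≤ C * n ^ (((k : ℝ) - 1) / α)) := by
  classical
  obtain ⟨K, rfl⟩ : ∃ K, k = K + 1 := ⟨k - 1, (Nat.succ_pred_eq_of_pos hk).symm⟩
  have hα0 : (0:ℝ) < α := one_pos.trans hα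
  refine ⟨((K:ℝ)+1) * 2 ^ K, by positivity, 1, fun n hn => ?_⟩
  have hn0 : (0:ℝ) ≤ n := le_trans zero_le_one hn
  have hx0 : (0:ℝ) ≤ n ^ (1/α) := Real.rpow_nonneg hn0 _
  have hx1 : (1:ℝ) ≤ n ^ (1/α) := Real.one_le_rpow hn (by positivity)
  set S := {i : Fin (K+1) → ℕ |
      (∑ j, (a j : ℝ) * (i j : ℝ) ^ α) < n ∧
      n < ∑ j, (a j : ℝ) * ((i j : ℝ) + 1) ^ α} with hSdef
  set M : ℕ := ⌊n ^ (1/α)⌋₊ + 1 with hMdef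
  have hM0 : 0 < M := Nat.succ_pos _
  -- coordinate bounds
  have hcoordR : ∀ i ∈ S, ∀ m, (i m : ℝ) ≤ n ^ (1/α) := by
    intro i hi m
    have hterm : (a m : ℝ) * (i m : ℝ) ^ α ≤ ∑ j, (a j : ℝ) * (i j : ℝ) ^ α :=
      Finset.single_le_sum (f := fun j => (a j : ℝ) * (i j : ℝ) ^ α)
        (fun j _ => by positivity) (Finset.mem_univ m)
    have ha1 : (1:ℝ) ≤ (a m : ℝ) := by exact_mod_cast ha m
    have h1 : ((i m : ℝ)) ^ α < n := by
      have := hi.1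
      nlinarith [Real.rpow_nonneg (Nat.cast_nonneg (i m) : (0:ℝ) ≤ (i m:ℝ)) α]
    have h2 : (((i m : ℝ)) ^ α) ^ (1/α) ≤ n ^ (1/α) :=
      Real.rpow_le_rpow (by positivity) h1.le (by positivity)
    rwa [← Real.rpow_mul (Nat.cast_nonneg _), mul_one_div, div_self (ne_of_gt hα0),
      Real.rpow_one] at h2
  have hcoord : ∀ i ∈ S, ∀ m, i m < M := by
    intro i hi m
    have := Nat.le_floor (hcoordR i hi m)
    omega
  -- the step function
  set H : (Fin (K+1) → ℕ) → ℕ → ℝ :=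
    fun i t => ∑ m, (a m : ℝ) * ((i m : ℝ) + if (m:ℕ) < t then 1 else 0) ^ α with hHdef
  have hHtop : ∀ i : Fin (K+1) → ℕ, H i (K+1) = ∑ j, (a j : ℝ) * ((i j : ℝ) + 1) ^ α := by
    intro i
    simp only [hHdef]
    exact Finset.sum_congr rfl fun m _ => by rw [if_pos m.isLt]
  have hHbot : ∀ i : Fin (K+1) → ℕ, H i 0 = ∑ j, (a j : ℝ) * (i j : ℝ) ^ α := by
    intro i
    simp only [hHdef]
    exact Finset.sum_congr rfl fun m _ => by rw [if_neg (Nat.not_lt_zero _), add_zero]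
  have hex : ∀ i ∈ S, ∃ t, n ≤ H i t := by
    intro i hi
    exact ⟨K+1, by rw [hHtop]; exact hi.2.le⟩
  set F : (Fin (K+1) → ℕ) → ℕ :=
    fun i => if hi : i ∈ S then Nat.find (hex i hi) else 1 with hFdef
  have hF1 : ∀ i ∈ S, 1 ≤ F i ∧ F i ≤ K + 1 := by
    intro i hi
    simp only [hFdef]
    rw [dif_pos hi]
    constructor
    · rw [Nat.one_le_iff_ne_zero]
      intro h0
      have := (Nat.find_eq_zero (hex i hi)).mp h0
      rw [hHbot] at this
      exact absurd hi.1 (not_lt.mpr this)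
    · exact Nat.find_le (by rw [hHtop]; exact hi.2.le)
  set J : (Fin (K+1) → ℕ) → Fin (K+1) :=
    fun i => ⟨(F i - 1) % (K+1), Nat.mod_lt _ (Nat.succ_pos _)⟩ with hJdef
  have hJval : ∀ i ∈ S, (J i : ℕ) = F i - 1 := by
    intro i hi
    have := hF1 i hi
    simp only [hJdef]
    exact Nat.mod_eq_of_lt (by omega)
  have hspec1 : ∀ i (hi : i ∈ S), n ≤ H i ((J i : ℕ) + 1) := by
    intro i hi
    have h1 := hF1 i hi
    have : (J i : ℕ) + 1 = F i := by rw [hJval i hi]; omega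
    rw [this]
    have hFeq : F i = Nat.find (hex i hi) := by simp only [hFdef]; rw [dif_pos hi]
    rw [hFeq]
    exact Nat.find_spec (hex i hi)
  have hspec2 : ∀ i (hi : i ∈ S), H i (J i : ℕ) < n := by
    intro i hi
    have h1 := hF1 i hi
    have hlt : (J i : ℕ) < F i := by rw [hJval i hi]; omega
    have hFeq : F i = Nat.find (hex i hi) := by simp only [hFdef]; rw [dif_pos hi]
    rw [hFeq] at hlt
    exact not_le.mp (Nat.find_min (hex i hi) hlt)
  -- the injection
  set Φ : (Fin (K+1) → ℕ) → Fin (K+1) × (Fin K → Fin M) :=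
    fun i => (J i, fun m => (⟨i ((J i).succAbove m) % M, Nat.mod_lt _ hM0⟩ : Fin M))
    with hΦdef
  have hinj : Set.InjOn Φ S := by
    intro i hi i' hi' heq
    have hJeq : J i = J i' := congrArg Prod.fst heq
    have hfeq := congrArg Prod.snd heq
    simp only [hΦdef] at hfeq
    have hoff : ∀ m, m ≠ J i → i m = i' m := by
      intro m hm
      obtain ⟨t, rfl⟩ := Fin.exists_succAbove_eq hm
      have ht := congrFun hfeq t
      rw [← hJeq] at ht
      have hv : i ((J i).succAbove t) % M = i' ((J i).succAbove t) % M :=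
        congrArg Fin.val ht
      rwa [Nat.mod_eq_of_lt (hcoord i hi _), Nat.mod_eq_of_lt (hcoord i' hi' _)] at hv
    funext m
    rcases eq_or_ne m (J i) with rfl | hm
    · by_contra hne
      rcases Nat.lt_or_ge (i (J i)) (i' (J i)) with hlt | hge
      · have h1 := hspec1 i hi
        have h2 := hspec2 i' hi'
        rw [← hJeq] at h2
        simp only [hHdef] at h1 h2
        exact straddle_aux α hα0 K a n i i' (J i) hoff hlt h1 h2
      · have hlt : i' (J i) < i (J i) := by omega
        have hoff' : ∀ m', m' ≠ J i → i' m' = i m' := fun m' hm' => (hoff m' hm').symm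
        have h1 := hspec1 i' hi'
        have h2 := hspec2 i hi
        rw [← hJeq] at h1
        simp only [hHdef] at h1 h2
        exact straddle_aux α hα0 K a n i' i (J i) hoff' hlt h1 h2
    · exact hoff m hm
  -- finiteness
  have hSfin : S.Finite := by
    apply Set.Finite.subset (Set.Finite.pi (fun j : Fin (K+1) => Set.finite_Iio M))
    intro i hi
    simp only [Set.mem_pi, Set.mem_univ, Set.mem_Iio, forall_true_left]
    exact fun j => hcoord i hi j
  refine ⟨hSfin, ?_⟩
  -- counting
  have hcount : S.ncard ≤ (K+1) * M ^ K := by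
    have h1 : S.ncard = (Φ '' S).ncard := (Set.ncard_image_of_injOn hinj).symm
    have h2 : (Φ '' S).ncard ≤ (Set.univ : Set (Fin (K+1) × (Fin K → Fin M))).ncard :=
      Set.ncard_le_ncard (Set.subset_univ _) Set.finite_univ
    rw [Set.ncard_univ, Nat.card_eq_fintype_card] at h2
    simp only [Fintype.card_prod, Fintype.card_fun, Fintype.card_fin] at h2
    omega
  -- arithmetic
  have hMle : (M:ℝ) ≤ 2 * n ^ (1/α) := by
    have hfl := Nat.floor_le hx0
    rw [hMdef]
    push_cast
    linarith
  have hstep : (S.ncard : ℝ) ≤ ((K:ℝ)+1) * (M:ℝ) ^ K := by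
    calc (S.ncard : ℝ) ≤ (((K+1) * M ^ K : ℕ) : ℝ) := Nat.cast_le.mpr hcount
      _ = ((K:ℝ)+1) * (M:ℝ) ^ K := by push_cast; ring
  have hpow : ((M:ℝ)) ^ K ≤ 2 ^ K * n ^ (((K:ℝ)+1-1)/α) := by
    have h1 : ((M:ℝ)) ^ K ≤ (2 * n ^ (1/α)) ^ K :=
      pow_le_pow_left₀ (Nat.cast_nonneg _) hMle K
    have h2 : (2 * n ^ (1/α)) ^ K = 2 ^ K * (n ^ (1/α)) ^ K := mul_pow _ _ _
    have h3 : (n ^ (1/α)) ^ K = n ^ (((K:ℝ)+1-1)/α) := by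
      rw [← Real.rpow_natCast (n ^ (1/α)) K, ← Real.rpow_mul hn0]
      congr 1
      field_simp
      ring
    rw [h2, h3] at h1
    exact h1
  calc (S.ncard : ℝ) ≤ ((K:ℝ)+1) * (M:ℝ) ^ K := hstep
    _ ≤ ((K:ℝ)+1) * (2 ^ K * n ^ (((K:ℝ)+1-1)/α)) := by
        apply mul_le_mul_of_nonneg_left hpow (by positivity)
    _ = ((K:ℝ)+1) * 2 ^ K * n ^ ((((K+1:ℕ):ℝ)-1)/α) := by push_cast; ring
end

section
/- Let α > 1, k ≥ 2, and n large. Define I = {(i_1,…,i_k) ∈ ℕ^k : i_1 > i_2 > ⋯ > i_k, i_1^α + ⋯ + i_k^α < n < (i_1+1)^α + ⋯ + (i_k+1)^α}. For t ≥ 0 define X_t = {(i_1,…,i_{k−1}) : ∃ i_k with (i_1,…,i_k) ∈ I, and 4ktα n^{1−1/α} ≤ i_1^α + ⋯ + i_{k−1}^α < (4kt+2k)α n^{1−1/α}}, and for a tuple (i_1,…,i_{k−1}) let I_{i_1,…,i_{k−1}} = {i_k : (i_1,…,i_{k−1},i_k) ∈ I}. Then for s ≠ t, (i_1,…,i_{k−1})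 ∈ X_s, and (j_1,…,j_{k−1}) ∈ X_t, the sets I_{i_1,…,i_{k−1}} and I_{j_1,…,j_{k−1}} are disjoint. -/
open Real Finset

/-- `(i, u)` corresponds to a member `(i_1,…,i_{k-1},i_k=u)` of
`I = {i_1 > ⋯ > i_k, i_1^α + ⋯ + i_k^α < n < (i_1+1)^α + ⋯ + (i_k+1)^α}`. -/
def memI (α n : ℝ) {k : ℕ} (i : Fin (k - 1) → ℕ) (u : ℕ) : Prop :=
  StrictAnti i ∧ (∀ r, u < i r) ∧
    (∑ r, (i r : ℝ) ^ α) + (u : ℝ) ^ α < n ∧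
    n < (∑ r, ((i r : ℝ) + 1) ^ α) + ((u : ℝ) + 1) ^ α

/-- `i ∈ X_t`. -/
def memX (α n : ℝ) {k : ℕ} (t : ℕ) (i : Fin (k - 1) → ℕ) : Prop :=
  (∃ u, memI α n i u) ∧
    4 * k * t * α * n ^ (1 - 1 / α) ≤ ∑ r, (i r : ℝ) ^ α ∧
    (∑ r, (i r : ℝ) ^ α) < (4 * k * t + 2 * k) * α * n ^ (1 - 1 / α)

/-- Bernoulli step: `(x+1)^α ≤ x^α + α (x+1)^(α-1)` for `x ≥ 0`, `α ≥ 1`. -/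
lemma bern (α : ℝ) (hα : 1 < α) (x : ℝ) (hx : 0 ≤ x) :
    (x + 1) ^ α ≤ x ^ α + α * (x + 1) ^ (α - 1) := by
  have hx1 : (0:ℝ) < x + 1 := by linarith
  have hs : (-1:ℝ) ≤ -(1 / (x + 1)) := by
    rw [neg_le_neg_iff, div_le_one hx1]; linarith
  have hb := one_add_mul_self_le_rpow_one_add hs hα.le
  have h1 : (1 + -(1 / (x + 1))) = x / (x + 1) := by field_simp; ring
  rw [h1, Real.div_rpow hx hx1.le] at hb
  have hp : (0:ℝ) < (x + 1) ^ α := Real.rpow_pos_of_pos hx1 α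
  have h3 : (x + 1) ^ (α - 1) = (x + 1) ^ α / (x + 1) := by
    rw [Real.rpow_sub hx1, Real.rpow_one]
  have hb' := mul_le_mul_of_nonneg_right hb hp.le
  have e1 : x ^ α / (x + 1) ^ α * (x + 1) ^ α = x ^ α := div_mul_cancel₀ _ hp.ne'
  have e2 : (1 + α * -(1 / (x + 1))) * (x + 1) ^ α
      = (x + 1) ^ α - α * ((x + 1) ^ α / (x + 1)) := by ring
  rw [e1, e2] at hb'
  rw [h3]; linarith

lemma sum_close (α n : ℝ) (hα : 1 < α) (hn0 : 0 < n) (k : ℕ) (hk : 2 ≤ k)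
    (key : ∀ x : ℕ, (x:ℝ) ^ α < n → α * ((x:ℝ) + 1) ^ (α - 1) ≤ 2 * α * n ^ (1 - 1/α))
    (i j : Fin (k - 1) → ℕ) (u : ℕ) (hi : memI α n i u) (hj : memI α n j u) :
    ∑ r, ((j r : ℝ)) ^ α < (∑ r, ((i r : ℝ)) ^ α) + 2 * k * (α * n ^ (1 - 1/α)) := by
  obtain ⟨-, -, hi1, hi2⟩ := hi
  obtain ⟨-, -, hj1, -⟩ := hj
  have hnn : ∀ r : Fin (k-1), (0:ℝ) ≤ (i r : ℝ) ^ α := fun r => Real.rpow_nonneg (Nat.cast_nonneg _) α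
  have hterm : ∀ r : Fin (k-1), ((i r : ℝ)) ^ α < n := by
    intro r
    have h1 : (i r : ℝ) ^ α ≤ ∑ r, ((i r : ℝ)) ^ α :=
      Finset.single_le_sum (fun r _ => hnn r) (Finset.mem_univ r)
    have h2 : (0:ℝ) ≤ (u:ℝ) ^ α := Real.rpow_nonneg (Nat.cast_nonneg _) α
    linarith
  have hu : ((u:ℝ)) ^ α < n := by
    have h1 : (0:ℝ) ≤ ∑ r, ((i r : ℝ)) ^ α := Finset.sum_nonneg fun r _ => hnn r
    linarith
  have hsum : ∑ r, ((i r : ℝ) + 1) ^ α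
      ≤ (∑ r, ((i r : ℝ)) ^ α) + (k - 1 : ℕ) * (2 * α * n ^ (1 - 1/α)) := by
    calc ∑ r, ((i r : ℝ) + 1) ^ α
        ≤ ∑ r, (((i r : ℝ)) ^ α + 2 * α * n ^ (1 - 1/α)) := by
          apply Finset.sum_le_sum
          intro r _
          have hb := bern α hα (i r) (Nat.cast_nonneg _)
          have hkk := key (i r) (hterm r)
          linarith
      _ = (∑ r, ((i r : ℝ)) ^ α) + (k - 1 : ℕ) * (2 * α * n ^ (1 - 1/α)) := by
          rw [Finset.sum_add_distrib, Finset.sum_const, Finset.card_univ, Fintype.card_fin,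
            nsmul_eq_mul]
  have hub : ((u:ℝ) + 1) ^ α ≤ (u:ℝ) ^ α + 2 * α * n ^ (1 - 1/α) :=
    (bern α hα u (Nat.cast_nonneg _)).trans (by linarith [key u hu])
  have hcast : ((k - 1 : ℕ) : ℝ) = (k:ℝ) - 1 := by
    rw [Nat.cast_sub (by omega)]; norm_num
  have hpos : (0:ℝ) ≤ 2 * α * n ^ (1 - 1/α) :=
    mul_nonneg (mul_nonneg (by norm_num) (by linarith)) (Real.rpow_nonneg hn0.le _)
  rw [hcast] at hsum
  nlinarith

/-- For s ≠ t, members of X_s and X_t have disjoint fiber sets I_{i_1,…,i_{k-1}}. -/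
theorem stmt5 (α : ℝ) (hα : 1 < α) (k : ℕ) (hk : 2 ≤ k) :
    ∃ N : ℝ, ∀ n : ℝ, N ≤ n → ∀ s t : ℕ, s ≠ t →
      ∀ i j : Fin (k - 1) → ℕ, memX α n s i → memX α n t j →
        Disjoint {u : ℕ | memI α n i u} {u : ℕ | memI α n j u} := by
  have hα0 : (0:ℝ) < α := by linarith
  set c : ℝ := 2 ^ (α - 1)⁻¹ with hc
  have hc1 : 1 < c := (Real.one_lt_rpow_iff_of_pos (by norm_num)).2
    (Or.inl ⟨by norm_num, inv_pos.2 (by linarith)⟩)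
  have hc2 : c ^ (α - 1) = 2 := Real.rpow_inv_rpow (by norm_num) (sub_ne_zero.2 hα.ne')
  refine ⟨max 1 ((c - 1)⁻¹ ^ α), fun n hn s t hst i j hi hj => ?_⟩
  have hn1 : (1:ℝ) ≤ n := le_trans (le_max_left _ _) hn
  have hn0 : (0:ℝ) < n := by linarith
  have key : ∀ x : ℕ, (x:ℝ) ^ α < n → α * ((x:ℝ) + 1) ^ (α - 1) ≤ 2 * α * n ^ (1 - 1/α) := by
    intro x hx
    have hx0 : (0:ℝ) ≤ (x:ℝ) := Nat.cast_nonneg x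
    have hlt : (x:ℝ) < n ^ α⁻¹ := (Real.lt_rpow_inv_iff_of_pos hx0 hn0.le hα0).2 hx
    have hcn : (c - 1)⁻¹ ≤ n ^ α⁻¹ := by
      have h1 : (c - 1)⁻¹ ^ α ≤ n := le_trans (le_max_right _ _) hn
      have h2 : (0:ℝ) ≤ (c - 1)⁻¹ := inv_nonneg.2 (by linarith)
      rw [← Real.rpow_le_rpow_iff h2 (by positivity) hα0, Real.rpow_inv_rpow hn0.le hα0.ne']
      exact h1
    have h1 : 1 ≤ (c - 1) * n ^ α⁻¹ := by
      have h2 := mul_le_mul_of_nonneg_left hcn (by linarith : (0:ℝ) ≤ c - 1)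
      rwa [mul_inv_cancel₀ (sub_ne_zero.2 hc1.ne')] at h2
    have hstep : (x:ℝ) + 1 ≤ c * n ^ α⁻¹ := by nlinarith
    have hmono : ((x:ℝ) + 1) ^ (α - 1) ≤ (c * n ^ α⁻¹) ^ (α - 1) :=
      Real.rpow_le_rpow (by positivity) hstep (by linarith)
    have heq : (c * n ^ α⁻¹) ^ (α - 1) = 2 * n ^ (1 - 1/α) := by
      rw [Real.mul_rpow (le_trans zero_le_one hc1.le) (by positivity), hc2,
        ← Real.rpow_mul hn0.le]
      congr 1
      field_simp
    calc α * ((x:ℝ) + 1) ^ (α - 1) ≤ α * (2 * n ^ (1 - 1/α)) :=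
          mul_le_mul_of_nonneg_left (hmono.trans heq.le) hα0.le
      _ = 2 * α * n ^ (1 - 1/α) := by ring
  rw [Set.disjoint_left]
  intro u hui huj
  have h1 := sum_close α n hα hn0 k hk key i j u hui huj
  have h2 := sum_close α n hα hn0 k hk key j i u huj hui
  obtain ⟨-, hXi1, hXi2⟩ := hi
  obtain ⟨-, hXj1, hXj2⟩ := hj
  have hA : (0:ℝ) ≤ α * n ^ (1 - 1/α) := mul_nonneg (by linarith) (Real.rpow_nonneg hn0.le _)
  have hk2 : (2:ℝ) ≤ (k:ℝ) := by exact_mod_cast hk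
  rcases hst.lt_or_gt with hlt | hlt
  · have hts : (s:ℝ) + 1 ≤ (t:ℝ) := by exact_mod_cast hlt
    nlinarith [mul_nonneg (mul_nonneg (by linarith : (0:ℝ) ≤ 4*(k:ℝ)) (sub_nonneg.2 hts)) hA]
  · have hts : (t:ℝ) + 1 ≤ (s:ℝ) := by exact_mod_cast hlt
    nlinarith [mul_nonneg (mul_nonneg (by linarith : (0:ℝ) ≤ 4*(k:ℝ)) (sub_nonneg.2 hts)) hA]
end

section
/- Let α > 1, k ≥ 3, d = ⌊2k²α⌋ + k, and n large. Define I and X_t as above, and for integers s_1,…,s_{k−2} let Y_{s_1,…,s_{k−2}} = {(i_1,…,i_{k−1}) : (i_1,…,i_{k−1}) lies in the projection of I and i_1 + d·i_v = s_{v−1} for each 2 ≤ v ≤ k−1}. Then |Y_{s_1,…,s_{k−2}} ∩ X_t| ≤ 1 for every choice of s_1,…,s_{k−2} and t. -/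
open Real Finset

/-- Bernoulli-type tangent line bound for rpow. -/
lemma bern_aux {α : ℝ} (hα : 1 ≤ α) {a b : ℝ} (ha : 0 < a) (hb : 0 ≤ b) :
    a ^ α + α * a ^ (α - 1) * (b - a) ≤ b ^ α := by
  have hs : -1 ≤ b / a - 1 := by
    have : 0 ≤ b / a := div_nonneg hb ha.le
    linarith
  have h := one_add_mul_self_le_rpow_one_add hs hα
  have h2 : (1 : ℝ) + (b / a - 1) = b / a := by ring
  rw [h2, Real.div_rpow hb ha.le] at h
  have ha' : (0:ℝ) < a ^ α := Real.rpow_pos_of_pos ha _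
  have h4 := mul_le_mul_of_nonneg_left h ha'.le
  have h5 : a ^ α * (b ^ α / a ^ α) = b ^ α := by field_simp
  have h6 : a ^ (α - 1) = a ^ α / a := by
    rw [Real.rpow_sub ha, Real.rpow_one]
  rw [h5] at h4
  calc a ^ α + α * a ^ (α - 1) * (b - a)
      = a ^ α * (1 + α * (b / a - 1)) := by
        rw [h6]; field_simp
    _ ≤ b ^ α := h4

/-- Analytic estimate: for `n` large, any `m` with `n < k*(m+1)^α` satisfies
`n^(1-1/α) ≤ k*α*m^(α-1)`. -/
lemma analytic_aux (α : ℝ) (hα : 1 < α) (k : ℕ) (hk : 3 ≤ k) :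
    ∃ N : ℝ, 1 ≤ N ∧ ∀ n : ℝ, N ≤ n → 0 < n ∧
      ∀ m : ℕ, n < k * ((m:ℝ) + 1) ^ α →
        n ^ (1 - 1/α) ≤ k * α * (m:ℝ) ^ (α - 1) := by
  have hα0 : (0:ℝ) < α := by linarith
  have hk3 : (3:ℝ) ≤ k := by exact_mod_cast hk
  have hk0 : (0:ℝ) < k := by linarith
  set c : ℝ := α * (k:ℝ) ^ (1/α) with hc_def
  have hkr1 : (1:ℝ) ≤ (k:ℝ) ^ (1/α) := by
    apply Real.one_le_rpow (by exact_mod_cast (by omega : 1 ≤ k)) (by positivity)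
  have hc1 : 1 < c := by
    have := mul_le_mul_of_nonneg_left hkr1 hα0.le
    simp only [mul_one] at this
    calc (1:ℝ) < α := hα
      _ ≤ c := this
  have hc0 : (0:ℝ) < c := by linarith
  set ρ : ℝ := c ^ (-(α-1)⁻¹) with hρ_def
  have hρ0 : 0 < ρ := Real.rpow_pos_of_pos hc0 _
  have hρ1 : ρ < 1 := Real.rpow_lt_one_of_one_lt_of_neg hc1 (by
    have : 0 < (α-1)⁻¹ := inv_pos.2 (by linarith)
    linarith)
  have h1ρ : 0 < 1 - ρ := by linarith
  set x0 : ℝ := max 2 (1-ρ)⁻¹ with hx0_def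
  have hx02 : (2:ℝ) ≤ x0 := le_max_left _ _
  have hx0pos : (0:ℝ) < x0 := by linarith
  refine ⟨(k:ℝ) * x0 ^ α, ?_, ?_⟩
  · have h2a : (1:ℝ) ≤ x0 ^ α := Real.one_le_rpow (by linarith) hα0.le
    nlinarith
  intro n hn
  have hx0a : (0:ℝ) < x0 ^ α := Real.rpow_pos_of_pos hx0pos _
  have hn0 : 0 < n := by nlinarith
  refine ⟨hn0, ?_⟩
  have hnk0 : (0:ℝ) < n / k := by positivity
  set x : ℝ := (n/(k:ℝ)) ^ (1/α) with hx_def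
  have hxpos : 0 < x := Real.rpow_pos_of_pos hnk0 _
  have hxx0 : x0 ≤ x := by
    have h1 : x0 ^ α ≤ n / k := by
      rw [le_div_iff₀ hk0]; nlinarith
    have h2 : (x0 ^ α) ^ (1/α) ≤ x :=
      Real.rpow_le_rpow hx0a.le h1 (by positivity)
    calc x0 = x0 ^ (α * (1/α)) := by
          rw [mul_one_div_cancel (ne_of_gt hα0), Real.rpow_one]
      _ = (x0 ^ α) ^ (1/α) := Real.rpow_mul hx0pos.le _ _
      _ ≤ x := h2
  have hx2 : (2:ℝ) ≤ x := le_trans hx02 hxx0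
  have hxρinv : (1-ρ)⁻¹ ≤ x := le_trans (le_max_right _ _) hxx0
  have hρx : ρ * x ≤ x - 1 := by
    have h2 := mul_le_mul_of_nonneg_left hxρinv h1ρ.le
    rw [mul_inv_cancel₀ (ne_of_gt h1ρ)] at h2
    nlinarith
  intro m hm
  -- x ≤ m + 1
  have hm1pos : (0:ℝ) < (m:ℝ) + 1 := by positivity
  have hxm : x ≤ (m:ℝ) + 1 := by
    have h1 : n / k ≤ ((m:ℝ)+1) ^ α := by
      rw [div_le_iff₀ hk0]; nlinarith [Real.rpow_pos_of_pos hm1pos α]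
    have h2 : x ≤ (((m:ℝ)+1) ^ α) ^ (1/α) :=
      Real.rpow_le_rpow hnk0.le h1 (by positivity)
    calc x ≤ (((m:ℝ)+1) ^ α) ^ (1/α) := h2
      _ = ((m:ℝ)+1) ^ (α * (1/α)) := (Real.rpow_mul hm1pos.le _ _).symm
      _ = (m:ℝ) + 1 := by rw [mul_one_div_cancel (ne_of_gt hα0), Real.rpow_one]
  have hmx : x - 1 ≤ (m:ℝ) := by linarith
  -- main chain
  have s1 : ρ ^ (α-1) * x ^ (α-1) ≤ (m:ℝ) ^ (α-1) := by
    rw [← Real.mul_rpow hρ0.le hxpos.le]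
    exact Real.rpow_le_rpow (by positivity) (le_trans hρx hmx) (by linarith)
  have s3 : ρ ^ (α-1) = c⁻¹ := by
    rw [hρ_def, ← Real.rpow_mul hc0.le, neg_mul,
      inv_mul_cancel₀ (by linarith : α - 1 ≠ 0), Real.rpow_neg_one]
  have key2 : c * (k:ℝ) ^ (1 - 1/α) = (k:ℝ) * α := by
    rw [hc_def, mul_assoc, ← Real.rpow_add hk0]
    rw [show 1/α + (1 - 1/α) = 1 by ring, Real.rpow_one]
    ring
  have hxa : x ^ (α-1) = n ^ (1 - 1/α) / (k:ℝ) ^ (1 - 1/α) := by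
    rw [hx_def, ← Real.rpow_mul hnk0.le,
      show (1/α) * (α - 1) = 1 - 1/α by field_simp,
      Real.div_rpow hn0.le hk0.le]
  have hkp : (0:ℝ) < (k:ℝ) ^ (1 - 1/α) := Real.rpow_pos_of_pos hk0 _
  have hc_alt : c = (k:ℝ) * α / (k:ℝ) ^ (1 - 1/α) := (eq_div_iff (ne_of_gt hkp)).2 key2
  have s4 : (k:ℝ) * α * x ^ (α-1) = c * n ^ (1 - 1/α) := by
    rw [hxa, hc_alt]; ring
  have s5 : c⁻¹ * ((k:ℝ) * α * x ^ (α-1)) = n ^ (1 - 1/α) := by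
    rw [s4]; field_simp
  calc n ^ (1 - 1/α) = (k:ℝ) * α * (c⁻¹ * x ^ (α-1)) := by rw [← s5]; ring
    _ = (k:ℝ) * α * (ρ ^ (α-1) * x ^ (α-1)) := by rw [s3]
    _ ≤ (k:ℝ) * α * (m:ℝ) ^ (α-1) := by
        apply mul_le_mul_of_nonneg_left s1 (by positivity)



/-- `i ∈ Y_{s_1,…,s_{k-2}}` where `d = ⌊2k²α⌋ + k`:  `i` is in the projection of `I`
and `i_1 + d·i_v = s_{v-1}` for `2 ≤ v ≤ k-1`. -/
def memY (α n : ℝ) {k : ℕ} (s : Fin (k - 1) → ℕ) (i : Fin (k - 1) → ℕ) : Prop :=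
  (∃ u, memI α n i u) ∧
    ∀ v0 v : Fin (k - 1), (v0 : ℕ) = 0 → 1 ≤ (v : ℕ) →
      i v0 + (Nat.floor (2 * (k : ℝ) ^ 2 * α) + k) * i v = s v

set_option maxHeartbeats 1000000 in
/-- `|Y_{s_1,…,s_{k-2}} ∩ X_t| ≤ 1`. -/
theorem stmt6 (α : ℝ) (hα : 1 < α) (k : ℕ) (hk : 3 ≤ k) :
    ∃ N : ℝ, ∀ n : ℝ, N ≤ n → ∀ (s : Fin (k - 1) → ℕ) (t : ℕ),
      ∀ i j : Fin (k - 1) → ℕ,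
        memY α n s i → memX α n t i → memY α n s j → memX α n t j → i = j := by
  obtain ⟨N, hN1, hN⟩ := analytic_aux α hα k hk
  refine ⟨N, fun n hn s t i j hYi hXi hYj hXj => ?_⟩
  obtain ⟨hn0, hmain⟩ := hN n hn
  have hα0 : (0:ℝ) < α := by linarith
  have hk3 : (3:ℝ) ≤ k := by exact_mod_cast hk
  set D : ℕ := Nat.floor (2 * (k:ℝ)^2 * α) + k with hD_def
  have hD0 : 0 < D := by omega
  have hv0lt : 0 < k - 1 := by omega
  have hv1lt : 1 < k - 1 := by omega
  set v0 : Fin (k-1) := ⟨0, hv0lt⟩ with hv0_def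
  set v1 : Fin (k-1) := ⟨1, hv1lt⟩ with hv1_def
  have hv0val : (v0:ℕ) = 0 := rfl
  have hv1val : (v1:ℕ) = 1 := rfl
  -- key asymmetric claim
  have key : ∀ a b : Fin (k-1) → ℕ, memY α n s a → memX α n t a →
      memY α n s b → memX α n t b → a v0 < b v0 → False := by
    intro a b hYa hXa hYb hXb hlt
    obtain ⟨u, hIa⟩ := hYa.1
    have hsa : ∀ v : Fin (k-1), 1 ≤ (v:ℕ) → a v0 + D * a v = s v :=
      fun v hv => hYa.2 v0 v hv0val hv
    have hsb : ∀ v : Fin (k-1), 1 ≤ (v:ℕ) → b v0 + D * b v = s v :=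
      fun v hv => hYb.2 v0 v hv0val hv
    have heq : ∀ v : Fin (k-1), 1 ≤ (v:ℕ) → a v0 + D * a v = b v0 + D * b v :=
      fun v hv => (hsa v hv).trans (hsb v hv).symm
    have hba : ∀ v : Fin (k-1), 1 ≤ (v:ℕ) → b v < a v := by
      intro v hv
      have h1 := heq v hv
      have h2 : D * b v < D * a v := by omega
      exact lt_of_mul_lt_mul_left h2 (Nat.zero_le D)
    set q : ℕ := a v1 - b v1 with hq_def
    have hv1v : 1 ≤ (v1:ℕ) := le_of_eq hv1val.symm
    have hq1 : 1 ≤ q := by have := hba v1 hv1v; omega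
    have hDq : b v0 = a v0 + D * q := by
      have h1 := heq v1 hv1v
      have h2 : D * a v1 = D * b v1 + D * q := by
        rw [← Nat.mul_add]; congr 1; omega
      omega
    have haq : ∀ v : Fin (k-1), 1 ≤ (v:ℕ) → a v = b v + q := by
      intro v hv
      have h1 := heq v hv
      have h2 : D * a v = D * (b v + q) := by
        rw [Nat.mul_add]
        have h3 := hDq
        omega
      exact Nat.eq_of_mul_eq_mul_left hD0 h2
    -- real part
    have hA1 : 1 ≤ a v0 := by have := hIa.2.1 v0; omega
    have hAp : (0:ℝ) < ((a v0 : ℕ):ℝ) := by exact_mod_cast Nat.lt_of_lt_of_le Nat.zero_lt_one hA1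
    set A : ℝ := ((a v0 : ℕ):ℝ) with hA_def
    set P : ℝ := α * A ^ (α - 1) with hP_def
    have hApow : (0:ℝ) < A ^ (α-1) := Real.rpow_pos_of_pos hAp _
    have hP0 : 0 < P := by rw [hP_def]; positivity
    have har_le : ∀ r, a r ≤ a v0 := by
      intro r
      rcases Nat.eq_zero_or_pos (r:ℕ) with h0 | h1
      · have : r = v0 := Fin.ext (by rw [h0, hv0val])
        rw [this]
      · exact (hIa.1 (show v0 < r by rw [Fin.lt_def]; omega)).le
    have har1 : ∀ r, 1 ≤ a r := fun r => by have := hIa.2.1 r; omega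
    -- n < k * (A+1)^α
    have hsum_n : n < (k:ℝ) * (A + 1) ^ α := by
      have h1 := hIa.2.2.2
      have hterm : ∀ r : Fin (k-1), ((a r : ℝ) + 1) ^ α ≤ (A + 1) ^ α := by
        intro r
        apply Real.rpow_le_rpow (by positivity) _ hα0.le
        have : ((a r : ℕ):ℝ) ≤ A := by rw [hA_def]; exact_mod_cast har_le r
        linarith
      have huterm : ((u:ℝ) + 1) ^ α ≤ (A + 1) ^ α := by
        apply Real.rpow_le_rpow (by positivity) _ hα0.le
        have h2 : u < a v0 := hIa.2.1 v0
        have : (u:ℝ) + 1 ≤ A := by rw [hA_def]; exact_mod_cast h2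
        linarith
      have hsum : (∑ r, ((a r:ℝ)+1)^α) ≤ ((k-1:ℕ):ℝ) * (A+1)^α := by
        calc (∑ r, ((a r:ℝ)+1)^α) ≤ ∑ _r : Fin (k-1), (A+1)^α :=
              Finset.sum_le_sum (fun r _ => hterm r)
          _ = ((k-1:ℕ):ℝ) * (A+1)^α := by
              rw [Finset.sum_const, Finset.card_univ, Fintype.card_fin, nsmul_eq_mul]
      have hcast : ((k-1 : ℕ):ℝ) = (k:ℝ) - 1 := by
        rw [Nat.cast_sub (by omega : 1 ≤ k)]; norm_num
      calc n < (∑ r, ((a r:ℝ)+1)^α) + ((u:ℝ)+1)^α := h1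
        _ ≤ ((k-1:ℕ):ℝ) * (A+1)^α + (A+1)^α := by linarith
        _ = (k:ℝ) * (A+1)^α := by rw [hcast]; ring
    have hnp : n ^ (1 - 1/α) ≤ (k:ℝ) * α * A ^ (α-1) := hmain (a v0) hsum_n
    -- termwise bounds
    have hbv0 : ((b v0 : ℕ):ℝ) = A + (D:ℝ)*(q:ℕ) := by
      rw [hA_def, hDq]; push_cast; ring
    have hb0 : P * ((D:ℝ) * (q:ℕ)) ≤ ((b v0:ℕ):ℝ) ^ α - A ^ α := by
      have h := bern_aux hα.le hAp (Nat.cast_nonneg (b v0))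
      have h2 : ((b v0:ℕ):ℝ) - A = (D:ℝ)*(q:ℕ) := by rw [hbv0]; ring
      rw [h2] at h
      rw [hP_def]
      linarith
    have hbr : ∀ r, r ≠ v0 → -(P * (q:ℕ)) ≤ ((b r:ℕ):ℝ)^α - ((a r:ℕ):ℝ)^α := by
      intro r hr
      have hvne : (r:ℕ) ≠ 0 := fun h => hr (Fin.ext (by rw [h, hv0val]))
      have hv : 1 ≤ (r:ℕ) := by omega
      have hav : a r = b r + q := haq r hv
      have hapos : (0:ℝ) < ((a r:ℕ):ℝ) := by exact_mod_cast har1 r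
      have h := bern_aux hα.le hapos (Nat.cast_nonneg (b r))
      have h2 : ((b r:ℕ):ℝ) - ((a r:ℕ):ℝ) = -((q:ℕ):ℝ) := by
        rw [hav]; push_cast; ring
      rw [h2] at h
      have h3 : ((a r:ℕ):ℝ)^(α-1) ≤ A^(α-1) := by
        apply Real.rpow_le_rpow (Nat.cast_nonneg _) _ (by linarith)
        rw [hA_def]; exact_mod_cast har_le r
      have h4 : α*((a r:ℕ):ℝ)^(α-1)*((q:ℕ):ℝ) ≤ P*((q:ℕ):ℝ) := by
        rw [hP_def]
        exact mul_le_mul_of_nonneg_right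
          (mul_le_mul_of_nonneg_left h3 hα0.le) (Nat.cast_nonneg q)
      linarith
    obtain ⟨_, hXa1, hXa2⟩ := hXa
    obtain ⟨_, hXb1, hXb2⟩ := hXb
    -- sum manipulation
    have hdiff : (∑ r, ((b r:ℕ):ℝ)^α) - (∑ r, ((a r:ℕ):ℝ)^α)
        = ∑ r, (((b r:ℕ):ℝ)^α - ((a r:ℕ):ℝ)^α) := (Finset.sum_sub_distrib _ _).symm
    have hsplit : ∑ r, (((b r:ℕ):ℝ)^α - ((a r:ℕ):ℝ)^α)
        = (((b v0:ℕ):ℝ)^α - A^α)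
          + ∑ r ∈ Finset.univ.erase v0, (((b r:ℕ):ℝ)^α - ((a r:ℕ):ℝ)^α) := by
      rw [hA_def]
      exact (Finset.add_sum_erase _ _ (Finset.mem_univ v0)).symm
    have hcard : (Finset.univ.erase v0).card = k - 2 := by
      rw [Finset.card_erase_of_mem (Finset.mem_univ v0), Finset.card_univ,
        Fintype.card_fin]
      omega
    have herase : ((k:ℝ) - 2) * (-(P * (q:ℕ)))
        ≤ ∑ r ∈ Finset.univ.erase v0, (((b r:ℕ):ℝ)^α - ((a r:ℕ):ℝ)^α) := by
      have h1 := Finset.sum_le_sum (s := Finset.univ.erase v0)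
        (f := fun _ => -(P * ((q:ℕ):ℝ)))
        (g := fun r => ((b r:ℕ):ℝ)^α - ((a r:ℕ):ℝ)^α)
        (fun r hr => hbr r (Finset.ne_of_mem_erase hr))
      rw [Finset.sum_const, hcard, nsmul_eq_mul] at h1
      have hc2 : ((k-2 : ℕ):ℝ) = (k:ℝ) - 2 := by
        rw [Nat.cast_sub (by omega : 2 ≤ k)]; norm_num
      rw [hc2] at h1
      exact h1
    have hlow : P*((D:ℝ)*(q:ℕ)) - ((k:ℝ)-2)*(P*(q:ℕ))
        ≤ (∑ r, ((b r:ℕ):ℝ)^α) - (∑ r, ((a r:ℕ):ℝ)^α) := by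
      rw [hdiff, hsplit]
      have := herase
      linarith
    have hup : (∑ r, ((b r:ℕ):ℝ)^α) - (∑ r, ((a r:ℕ):ℝ)^α)
        < 2*(k:ℝ)*α*n^(1-1/α) := by
      have h1 : ((4*(k:ℕ)*(t:ℕ) : ℝ) + 2*(k:ℕ)) * α * n^(1-1/α)
          = 4*(k:ℕ)*(t:ℕ)*α*n^(1-1/α) + 2*(k:ℕ)*α*n^(1-1/α) := by ring
      linarith
    -- floor bound
    have hDge : 2*(k:ℝ)^2*α - 1 + (k:ℝ) ≤ (D:ℝ) := by
      have h1 : 2*(k:ℝ)^2*α < (Nat.floor (2*(k:ℝ)^2*α) : ℝ) + 1 :=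
        Nat.lt_floor_add_one _
      rw [hD_def]; push_cast; linarith
    have hq1' : (1:ℝ) ≤ ((q:ℕ):ℝ) := by exact_mod_cast hq1
    have c0 : P*((D:ℝ)*(q:ℕ)) - ((k:ℝ)-2)*(P*(q:ℕ))
        = P * (q:ℕ) * ((D:ℝ) - ((k:ℝ)-2)) := by ring
    have c2 : (2*(k:ℝ)^2*α + 1) ≤ (D:ℝ) - ((k:ℝ)-2) := by linarith
    have c3 : P * ((q:ℕ):ℝ) * (2*(k:ℝ)^2*α + 1)
        ≤ P * ((q:ℕ):ℝ) * ((D:ℝ) - ((k:ℝ)-2)) := by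
      apply mul_le_mul_of_nonneg_left c2 (by positivity)
    have c4 : P * (2*(k:ℝ)^2*α + 1) ≤ P * ((q:ℕ):ℝ) * (2*(k:ℝ)^2*α + 1) := by
      have h1 : (0:ℝ) ≤ 2*(k:ℝ)^2*α + 1 := by nlinarith
      nlinarith [mul_nonneg (mul_nonneg hP0.le h1) (sub_nonneg.2 hq1')]
    have c5 : 2*(k:ℝ)*α * (n^(1-1/α)) ≤ 2*(k:ℝ)*α * ((k:ℝ)*α*A^(α-1)) :=
      mul_le_mul_of_nonneg_left hnp (by positivity)
    have c6 : 2*(k:ℝ)*α*((k:ℝ)*α*A^(α-1)) = P * (2*(k:ℝ)^2*α) := by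
      rw [hP_def]; ring
    linarith [hlow, hup, c0, c3, c4, c5, c6, hP0]
  -- trichotomy
  rcases lt_trichotomy (i v0) (j v0) with hlt | heq0 | hlt
  · exact (key i j hYi hXi hYj hXj hlt).elim
  · funext r
    rcases Nat.eq_zero_or_pos (r:ℕ) with h0 | h1
    · have hr : r = v0 := Fin.ext (by rw [h0, hv0val])
      rw [hr]; exact heq0
    · have e1 := hYi.2 v0 r hv0val h1
      have e2 := hYj.2 v0 r hv0val h1
      rw [← hD_def] at e1 e2
      have h2 : D * i r = D * j r := by omega
      exact Nat.eq_of_mul_eq_mul_left hD0 h2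
  · exact (key j i hYj hXj hYi hXi hlt).elim
end

section
/- Let α > 1, k ≥ 2, and let (i_1,…,i_{k−1}) ∈ ℕ^{k−1} with (i_1+1)^α + ⋯ + (i_{k−1}+1)^α < n − n^{(α−1)/α}. Then the number of non-negative integers i_k with i_1^α + ⋯ + i_{k−1}^α + i_k^α < n < (i_1+1)^α + ⋯ + (i_{k−1}+1)^α + (i_k+1)^α is O( ((i_1+1)^{α−1} + ⋯ + (i_{k−1}+1)^{α−1}) / (n − (i_1+1)^α − ⋯ − (i_{k−1}+1)^α)^{1−1/α} + 1 ). -/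
open Real Finset

/-- Mean value theorem for `rpow`. -/
lemma mvt_rpow (c x y : ℝ) (hc : 0 < c) (hx : 0 ≤ x) (hxy : x < y) :
    ∃ t ∈ Set.Ioo x y, y ^ c - x ^ c = c * t ^ (c - 1) * (y - x) := by
  have hcont : ContinuousOn (fun z : ℝ => z ^ c) (Set.Icc x y) := fun z _ =>
    (Real.continuousAt_rpow_const z c (Or.inr hc.le)).continuousWithinAt
  have hderiv : ∀ t ∈ Set.Ioo x y, HasDerivAt (fun z : ℝ => z ^ c) (c * t ^ (c - 1)) t := by
    intro t ht
    have ht0 : t ≠ 0 := ne_of_gt (lt_of_le_of_lt hx ht.1)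
    exact Real.hasDerivAt_rpow_const (Or.inl ht0)
  obtain ⟨t, ht, heq⟩ := exists_hasDerivAt_eq_slope (fun z : ℝ => z ^ c)
    (fun t => c * t ^ (c - 1)) hxy hcont hderiv
  refine ⟨t, ht, ?_⟩
  have hyx : y - x ≠ 0 := sub_ne_zero.mpr (ne_of_gt hxy)
  field_simp at heq
  linarith [heq]

/-- Bound on the size of the fiber I_{i_1,…,i_{k-1}} when the cube is not too close
to the boundary. -/
theorem stmt8 (α : ℝ) (hα : 1 < α) (k : ℕ) (hk : 2 ≤ k) :
    ∃ C > (0:ℝ), ∀ n : ℝ, ∀ i : Fin (k - 1) → ℕ,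
      (∑ r, ((i r : ℝ) + 1) ^ α) < n - n ^ ((α - 1) / α) →
      ((Set.ncard {u : ℕ |
          (∑ r, (i r : ℝ) ^ α) + (u : ℝ) ^ α < n ∧
          n < (∑ r, ((i r : ℝ) + 1) ^ α) + ((u : ℝ) + 1) ^ α} : ℝ)
        ≤ C * ((∑ r, ((i r : ℝ) + 1) ^ (α - 1))
              / (n - ∑ r, ((i r : ℝ) + 1) ^ α) ^ (1 - 1 / α) + 1)) := by
  refine ⟨2, by norm_num, ?_⟩
  intro n i hTn
  have hα0 : (0:ℝ) < α := by linarith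
  set S : ℝ := ∑ r, ((i r : ℝ)) ^ α with hSdef
  set T : ℝ := ∑ r, ((i r : ℝ) + 1) ^ α with hTdef
  set W : ℝ := ∑ r, ((i r : ℝ) + 1) ^ (α - 1) with hWdef
  have hkne : Nonempty (Fin (k - 1)) := by
    refine ⟨⟨0, ?_⟩⟩; omega
  -- T ≥ 1
  have hT1 : (1:ℝ) ≤ T := by
    have h1 : ∀ r : Fin (k - 1), (1:ℝ) ≤ ((i r : ℝ) + 1) ^ α := fun r =>
      Real.one_le_rpow (le_add_of_nonneg_left (Nat.cast_nonneg _)) hα0.le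
    calc (1:ℝ) ≤ ((i (Classical.arbitrary _) : ℝ) + 1) ^ α := h1 _
      _ ≤ T := Finset.single_le_sum (f := fun r => ((i r : ℝ) + 1) ^ α)
          (fun r _ => Real.rpow_nonneg (by positivity : (0:ℝ) ≤ (i r : ℝ) + 1) α) (Finset.mem_univ _)
  have he0 : 0 < (α - 1) / α := div_pos (by linarith) hα0
  have he1 : (α - 1) / α ≤ 1 := by
    rw [div_le_one hα0]; linarith
  -- n > 1
  have hn1 : 1 < n := by
    rcases lt_or_ge n 0 with hn | hn
    · exfalso
      have habs : n ^ ((α - 1) / α) ≥ -(|n| ^ ((α - 1) / α)) := by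
        have := Real.abs_rpow_le_abs_rpow n ((α - 1) / α)
        have := abs_le.mp (le_refl |n ^ ((α - 1) / α)|)
        nlinarith [Real.abs_rpow_le_abs_rpow n ((α - 1) / α),
          neg_abs_le (n ^ ((α - 1) / α))]
      have hmax : |n| ^ ((α - 1) / α) ≤ max 1 |n| := by
        rcases le_total |n| 1 with h | h
        · exact le_trans (Real.rpow_le_one (abs_nonneg n) h he0.le) (le_max_left _ _)
        · calc |n| ^ ((α - 1) / α) ≤ |n| ^ (1:ℝ) :=
              Real.rpow_le_rpow_of_exponent_le h he1
            _ = |n| := Real.rpow_one _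
            _ ≤ max 1 |n| := le_max_right _ _
      have hnabs : |n| = -n := abs_of_neg hn
      rcases le_total |n| 1 with h | h
      · have : n > 1 - |n| ^ ((α - 1) / α) := by linarith
        have h2 : |n| ^ ((α - 1) / α) ≤ 1 := Real.rpow_le_one (abs_nonneg n) h he0.le
        linarith
      · have h2 : |n| ^ ((α - 1) / α) ≤ |n| := by
          calc |n| ^ ((α - 1) / α) ≤ |n| ^ (1:ℝ) :=
              Real.rpow_le_rpow_of_exponent_le h he1
            _ = |n| := Real.rpow_one _
        linarith [hnabs]
    · have : 0 ≤ n ^ ((α - 1) / α) := Real.rpow_nonneg hn _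
      linarith
  have hn0 : 0 < n := by linarith
  have hnT : 0 < n - T := by
    have : 0 < n ^ ((α - 1) / α) := Real.rpow_pos_of_pos hn0 _
    linarith
  have hST : S < T := by
    apply Finset.sum_lt_sum_of_nonempty Finset.univ_nonempty
    intro r _
    exact Real.rpow_lt_rpow (Nat.cast_nonneg _) (lt_add_one _) hα0
  have hnS : 0 < n - S := by linarith
  set A : ℝ := (n - T) ^ (α⁻¹) with hAdef
  set B : ℝ := (n - S) ^ (α⁻¹) with hBdef
  have hαinv : (0:ℝ) < α⁻¹ := by positivity
  have hA0 : 0 < A := Real.rpow_pos_of_pos hnT _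
  have hB0 : 0 < B := Real.rpow_pos_of_pos hnS _
  have hAB : A < B := Real.rpow_lt_rpow hnT.le (by linarith) hαinv
  have hAα : A ^ α = n - T := Real.rpow_inv_rpow hnT.le (ne_of_gt hα0)
  have hBα : B ^ α = n - S := Real.rpow_inv_rpow hnS.le (ne_of_gt hα0)
  -- inclusion into a finite interval
  have hsub : {u : ℕ | S + (u : ℝ) ^ α < n ∧ n < T + ((u : ℝ) + 1) ^ α}
      ⊆ ↑(Finset.Ico ⌊A⌋₊ ⌈B⌉₊) := by
    intro u hu
    obtain ⟨h1, h2⟩ := hu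
    simp only [Finset.coe_Ico, Set.mem_Ico]
    constructor
    · -- A < u + 1
      have hAu : A < (u : ℝ) + 1 := by
        by_contra hcon
        push_neg at hcon
        have : ((u : ℝ) + 1) ^ α ≤ A ^ α := Real.rpow_le_rpow (by positivity) hcon hα0.le
        rw [hAα] at this
        linarith
      have : (⌊A⌋₊ : ℝ) < (u : ℝ) + 1 := lt_of_le_of_lt (Nat.floor_le hA0.le) hAu
      have : (⌊A⌋₊ : ℝ) < ((u + 1 : ℕ) : ℝ) := by push_cast; linarith
      exact Nat.lt_succ_iff.mp (Nat.cast_lt.mp this)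
    · -- u < B
      have hub : (u : ℝ) < B := by
        by_contra hcon
        push_neg at hcon
        have : B ^ α ≤ (u : ℝ) ^ α := Real.rpow_le_rpow hB0.le hcon hα0.le
        rw [hBα] at this
        linarith
      have : (u : ℝ) < (⌈B⌉₊ : ℝ) := lt_of_lt_of_le hub (Nat.le_ceil _)
      exact Nat.cast_lt.mp this
  have hfin : (↑(Finset.Ico ⌊A⌋₊ ⌈B⌉₊) : Set ℕ).Finite := (Finset.Ico _ _).finite_toSet
  have hcard : Set.ncard {u : ℕ | S + (u : ℝ) ^ α < n ∧ n < T + ((u : ℝ) + 1) ^ α}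
      ≤ ⌈B⌉₊ - ⌊A⌋₊ := by
    calc Set.ncard _ ≤ (↑(Finset.Ico ⌊A⌋₊ ⌈B⌉₊) : Set ℕ).ncard :=
          Set.ncard_le_ncard hsub hfin
      _ = (Finset.Ico ⌊A⌋₊ ⌈B⌉₊).card := Set.ncard_coe_finset _
      _ = ⌈B⌉₊ - ⌊A⌋₊ := Nat.card_Ico _ _
  -- cast bound : card ≤ B - A + 2
  have hcast : ((⌈B⌉₊ - ⌊A⌋₊ : ℕ) : ℝ) ≤ B - A + 2 := by
    rcases le_or_gt ⌊A⌋₊ ⌈B⌉₊ with h | h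
    · rw [Nat.cast_sub h]
      have h1 : (⌈B⌉₊ : ℝ) < B + 1 := Nat.ceil_lt_add_one hB0.le
      have h2 : A - 1 < (⌊A⌋₊ : ℝ) := Nat.sub_one_lt_floor A
      linarith
    · rw [Nat.sub_eq_zero_of_le h.le]
      norm_num
      linarith
  -- MVT bound on B - A
  obtain ⟨t, ht, heq⟩ := mvt_rpow α⁻¹ (n - T) (n - S) hαinv hnT.le (by linarith)
  have ht0 : 0 < t := lt_trans hnT ht.1
  have htineq : t ^ (α⁻¹ - 1) ≤ (n - T) ^ (α⁻¹ - 1) := by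
    apply Real.rpow_le_rpow_of_nonpos hnT ht.1.le
    have : α⁻¹ < 1 := by
      rw [inv_lt_one_iff₀]; right; exact hα
    linarith
  -- T - S ≤ α * W
  have hTS : T - S ≤ α * W := by
    rw [hTdef, hSdef, hWdef, ← Finset.sum_sub_distrib, Finset.mul_sum]
    apply Finset.sum_le_sum
    intro r _
    obtain ⟨s, hs, hseq⟩ := mvt_rpow α (i r : ℝ) ((i r : ℝ) + 1) hα0
      (Nat.cast_nonneg _) (lt_add_one _)
    have hs0 : 0 ≤ s := le_trans (Nat.cast_nonneg _) hs.1.le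
    have hsle : s ^ (α - 1) ≤ ((i r : ℝ) + 1) ^ (α - 1) :=
      Real.rpow_le_rpow hs0 hs.2.le (by linarith)
    calc ((i r : ℝ) + 1) ^ α - (i r : ℝ) ^ α = α * s ^ (α - 1) * ((i r : ℝ) + 1 - i r) :=
        hseq
      _ = α * s ^ (α - 1) := by ring_nf
      _ ≤ α * ((i r : ℝ) + 1) ^ (α - 1) := by nlinarith [hα0]
  have hW0 : 0 ≤ W := Finset.sum_nonneg fun r _ => Real.rpow_nonneg (by positivity) _
  -- B - A ≤ W / (n - T)^(1 - 1/α)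
  have hBA : B - A ≤ W / (n - T) ^ (1 - 1/α) := by
    have hy : (n - S) - (n - T) = T - S := by ring
    have hBA' : B - A = α⁻¹ * t ^ (α⁻¹ - 1) * (T - S) := by
      rw [hBdef, hAdef]; rw [heq, hy]
    have ht0' : 0 < t ^ (α⁻¹ - 1) := Real.rpow_pos_of_pos ht0 _
    have step1 : B - A ≤ α⁻¹ * (n - T) ^ (α⁻¹ - 1) * (α * W) := by
      rw [hBA']
      have hTS0 : 0 < T - S := by linarith
      have h1 : α⁻¹ * t ^ (α⁻¹ - 1) * (T - S) ≤ α⁻¹ * (n - T) ^ (α⁻¹ - 1) * (T - S) := by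
        apply mul_le_mul_of_nonneg_right _ hTS0.le
        exact mul_le_mul_of_nonneg_left htineq hαinv.le
      have h2 : α⁻¹ * (n - T) ^ (α⁻¹ - 1) * (T - S) ≤ α⁻¹ * (n - T) ^ (α⁻¹ - 1) * (α * W) := by
        apply mul_le_mul_of_nonneg_left hTS
        positivity
      linarith
    have hsimp : α⁻¹ * (n - T) ^ (α⁻¹ - 1) * (α * W) = W * (n - T) ^ (α⁻¹ - 1) := by
      field_simp
    rw [hsimp] at step1
    have hexp : (n - T) ^ (α⁻¹ - 1) = ((n - T) ^ (1 - 1/α))⁻¹ := by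
      rw [← Real.rpow_neg hnT.le]
      congr 1
      field_simp
      ring
    rw [hexp] at step1
    rw [div_eq_mul_inv]
    exact step1
  -- combine
  have hfrac0 : 0 ≤ W / (n - T) ^ (1 - 1/α) := by positivity
  have hc : (Set.ncard {u : ℕ | S + (u : ℝ) ^ α < n ∧ n < T + ((u : ℝ) + 1) ^ α} : ℝ)
      ≤ B - A + 2 := by
    calc (Set.ncard _ : ℝ) ≤ ((⌈B⌉₊ - ⌊A⌋₊ : ℕ) : ℝ) := Nat.cast_le.mpr hcard
      _ ≤ B - A + 2 := hcast
  calc (Set.ncard {u : ℕ | S + (u : ℝ) ^ α < n ∧ n < T + ((u : ℝ) + 1) ^ α} : ℝ)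
      ≤ B - A + 2 := hc
    _ ≤ W / (n - T) ^ (1 - 1/α) + 2 := by linarith
    _ ≤ 2 * (W / (n - T) ^ (1 - 1/α) + 1) := by linarith
end
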